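/- For any fixed delta in (0,1), the W-ary entropy function H_W(delta) = delta*log_W(W-1) - delta*log_W(delta) - (1-delta)*log_W(1-delta) is strictly decreasing in W for all integers W >= max{2, (1-delta)^{-1}}. -/

import Mathlib

/-- The `W`-ary entropy function
`H_W(δ) = δ·log_W(W-1) - δ·log_W δ - (1-δ)·log_W(1-δ)`, with `log_W x = log x / log W`. -/
noncomputable def entW (W : ℕ) (δ : ℝ) : ℝ :=
  δ * (Real.log ((W : ℝ) - 1) / Real.log W)
    - δ * (Real.log δ / Real.log W)
    - (1 - δ) * (Real.log (1 - δ) / Real.log W)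

section Aux
open Real Set

lemma keyA (δ t : ℝ) (hδ : 0 < δ) (ht : 0 < t) (htd : t < 1 - δ) :
    δ * Real.binEntropy t < (1 - t) * Real.binEntropy δ := by
  have ht1 : t < 1 := by linarith
  have h1t : 0 < 1 - t := by linarith
  set a : ℝ := δ / (1 - t) with ha_def
  have ha : 0 < a := div_pos hδ h1t
  have hb : 0 < 1 - a := by
    rw [ha_def, sub_pos, div_lt_one h1t]; linarith
  have hmem1 : t ∈ Icc (0:ℝ) 1 := ⟨ht.le, ht1.le⟩
  have hmem2 : (1:ℝ) ∈ Icc (0:ℝ) 1 := ⟨zero_le_one, le_refl 1⟩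
  have hne : t ≠ 1 := ne_of_lt ht1
  have hconc := Real.strictConcave_binEntropy.2 hmem1 hmem2 hne ha hb (by ring)
  have hpt : a • t + (1 - a) • (1:ℝ) = 1 - δ := by
    rw [smul_eq_mul, smul_eq_mul, ha_def]; field_simp; ring
  rw [hpt, Real.binEntropy_one_sub, Real.binEntropy_one, smul_eq_mul, smul_eq_mul] at hconc
  have : a * Real.binEntropy t < Real.binEntropy δ := by linarith
  calc δ * Real.binEntropy t = (1 - t) * (a * Real.binEntropy t) := by
        rw [ha_def]; field_simp
    _ < (1 - t) * Real.binEntropy δ := by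
        exact mul_lt_mul_of_pos_left this h1t

lemma keyB (δ x : ℝ) (hδ : 0 < δ) (hx : 1 < x) (hxd : x⁻¹ < 1 - δ) :
    δ * x * Real.log x < (x - 1) * (δ * Real.log (x - 1) + Real.binEntropy δ) := by
  have hx0 : 0 < x := by linarith
  have hx1 : 0 < x - 1 := by linarith
  have hA := keyA δ x⁻¹ hδ (inv_pos.2 hx0) hxd
  have hE : Real.binEntropy x⁻¹ = x⁻¹ * (x * Real.log x - (x - 1) * Real.log (x - 1)) := by
    have h1 : (1 : ℝ) - x⁻¹ = (x - 1) / x := by field_simp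
    have h2 : ((x - 1) / x)⁻¹ = x / (x - 1) := by rw [inv_div]
    rw [Real.binEntropy, inv_inv, h1, h2, Real.log_div (ne_of_gt hx0) (ne_of_gt hx1)]
    field_simp
    ring
  rw [hE] at hA
  have h1 : (1 : ℝ) - x⁻¹ = (x - 1) / x := by field_simp
  rw [h1] at hA
  have := mul_lt_mul_of_pos_left hA hx0
  rw [show x * (δ * (x⁻¹ * (x * Real.log x - (x - 1) * Real.log (x - 1))))
      = δ * (x * Real.log x - (x - 1) * Real.log (x - 1)) by field_simp; try ring,
    show x * ((x - 1) / x * Real.binEntropy δ) = (x - 1) * Real.binEntropy δ by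
      field_simp; try ring] at this
  nlinarith [this]

lemma keyDeriv (δ : ℝ) (hδ : 0 < δ) (x : ℝ) (hx2 : 2 ≤ x) (hxd : x⁻¹ < 1 - δ) :
    HasDerivAt (fun y : ℝ => (δ * Real.log (y - 1) + Real.binEntropy δ) / Real.log y)
      ((δ * (x - 1)⁻¹ * Real.log x -
        (δ * Real.log (x - 1) + Real.binEntropy δ) * x⁻¹) / (Real.log x) ^ 2) x := by
  have hx1 : (0:ℝ) < x - 1 := by linarith
  have hx0 : (0:ℝ) < x := by linarith
  have hlog : Real.log x ≠ 0 := ne_of_gt (Real.log_pos (by linarith))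
  have hnum : HasDerivAt (fun y : ℝ => δ * Real.log (y - 1) + Real.binEntropy δ)
      (δ * (x - 1)⁻¹) x := by
    have h1 : HasDerivAt (fun y : ℝ => y - 1) 1 x := (hasDerivAt_id x).sub_const 1
    have h2 := (Real.hasDerivAt_log (ne_of_gt hx1)).comp x h1
    simpa using (h2.const_mul δ).add_const (Real.binEntropy δ)
  have hden : HasDerivAt Real.log x⁻¹ x := Real.hasDerivAt_log (ne_of_gt hx0)
  have := hnum.div hden hlog
  exact this
  try ring

lemma keyNeg (δ : ℝ) (hδ : 0 < δ) (x : ℝ) (hx2 : 2 ≤ x) (hxd : x⁻¹ < 1 - δ) :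
    (δ * (x - 1)⁻¹ * Real.log x -
      (δ * Real.log (x - 1) + Real.binEntropy δ) * x⁻¹) / (Real.log x) ^ 2 < 0 := by
  have hx1 : (0:ℝ) < x - 1 := by linarith
  have hx0 : (0:ℝ) < x := by linarith
  have hlog : 0 < Real.log x := Real.log_pos (by linarith)
  apply div_neg_of_neg_of_pos _ (by positivity)
  have hB := keyB δ x hδ (by linarith) hxd
  rw [sub_neg,
    show δ * (x - 1)⁻¹ * Real.log x = (δ * Real.log x) / (x - 1) by ring,
    show (δ * Real.log (x - 1) + Real.binEntropy δ) * x⁻¹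
      = (δ * Real.log (x - 1) + Real.binEntropy δ) / x by ring,
    div_lt_div_iff₀ hx1 hx0]
  nlinarith [hB]

theorem entW_strictAnti_aux (δ : ℝ) (hδ0 : 0 < δ) (hδ1 : δ < 1) (a b : ℝ)
    (ha2 : 2 ≤ a) (had : (1 - δ)⁻¹ ≤ a) (hab : a < b) :
    (δ * Real.log (b - 1) + Real.binEntropy δ) / Real.log b <
      (δ * Real.log (a - 1) + Real.binEntropy δ) / Real.log a := by
  have h1δ : 0 < 1 - δ := by linarith
  have hcont : ContinuousOn
      (fun y : ℝ => (δ * Real.log (y - 1) + Real.binEntropy δ) / Real.log y) (Icc a b) := by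
    have hl1 : ContinuousOn (fun y : ℝ => Real.log (y - 1)) (Icc a b) :=
      Real.continuousOn_log.comp ((continuous_sub_right (1:ℝ)).continuousOn)
        (fun y hy => by
          have : 2 ≤ y := le_trans ha2 hy.1
          simp only [mem_compl_iff, mem_singleton_iff]
          intro h; linarith [sub_eq_zero.mp h])
    have hl2 : ContinuousOn Real.log (Icc a b) :=
      Real.continuousOn_log.mono (fun y hy => by
        have : 2 ≤ y := le_trans ha2 hy.1
        simp only [mem_compl_iff, mem_singleton_iff]; intro h; linarith)
    exact (((hl1.const_smul δ).add continuousOn_const).div hl2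
      (fun y hy => ne_of_gt (Real.log_pos (by have := le_trans ha2 hy.1; linarith))))
  have hanti : StrictAntiOn
      (fun y : ℝ => (δ * Real.log (y - 1) + Real.binEntropy δ) / Real.log y) (Icc a b) := by
    apply strictAntiOn_of_deriv_neg (convex_Icc a b) hcont
    intro x hx
    rw [interior_Icc] at hx
    have hx2 : 2 ≤ x := le_of_lt (lt_of_le_of_lt ha2 hx.1)
    have hxd : x⁻¹ < 1 - δ := by
      have hax : (1 - δ)⁻¹ < x := lt_of_le_of_lt had hx.1
      have h0 : (0:ℝ) < (1 - δ)⁻¹ := inv_pos.2 h1δ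
      calc x⁻¹ < ((1 - δ)⁻¹)⁻¹ := by
            exact inv_strictAnti₀ h0 hax
        _ = 1 - δ := inv_inv _
    rw [(keyDeriv δ hδ0 x hx2 hxd).deriv]
    exact keyNeg δ hδ0 x hx2 hxd
  exact hanti (left_mem_Icc.2 hab.le) (right_mem_Icc.2 hab.le) hab


end Aux

open Real Set

/-- For fixed `δ ∈ (0,1)`, the `W`-ary entropy `H_W(δ)` is strictly decreasing in the
integer `W` on the range `W ≥ max {2, (1-δ)⁻¹}`. -/
theorem entW_strictAnti_in_W (δ : ℝ) (hδ : δ ∈ Set.Ioo (0 : ℝ) 1) :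
    ∀ W W' : ℕ, 2 ≤ W → (1 - δ)⁻¹ ≤ (W : ℝ) → W < W' → entW W' δ < entW W δ := by
  obtain ⟨hδ0, hδ1⟩ := hδ
  intro W W' hW2 hWd hWW'
  have key : ∀ V : ℕ, entW V δ
      = (δ * Real.log ((V:ℝ) - 1) + Real.binEntropy δ) / Real.log V := by
    intro V
    rw [entW, Real.binEntropy, Real.log_inv, Real.log_inv]
    ring
  rw [key, key]
  have hW2' : (2:ℝ) ≤ (W:ℝ) := by exact_mod_cast hW2
  have hlt : (W:ℝ) < (W':ℝ) := by exact_mod_cast hWW'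
  exact entW_strictAnti_aux δ hδ0 hδ1 W W' hW2' hWd hlt
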